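/- Cycle-leader counting sort correctness: let S be an array of n elements with keys in [1,m], let c_i = 1 + Σ_{j<i} (number of elements with key j) be the starting position of key i's bucket, and c_{m+1} = n+1. Define a process that repeatedly, at position j, checks whether the key i of S[j] satisfies c_i ≤ j < c_{i+1}; if so advances j, otherwise swaps S[j] with S[c_i + d_i] and increments d_i (where d_i counts elements already placed in bucket i). Then the process terminates after at most 2n operations (each element is either skipped once or swapped into its final bucket region and never leaves it), and upon termination S is sorted by key. -/

import Mathlib

namespace Stmt17

/-- Swap the contents of positions `p` and `q` of the array `a`. -/
def swapFn (a : ℕ → ℕ) (p q : ℕ) : ℕ → ℕ :=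
  fun r => if r = p then a q else if r = q then a p else a r

/-- One step of the cycle-leader counting-sort process on state
`(j, d, a)` (current position, bucket fill counts, array of keys), with
bucket boundaries `c` and array positions `1,…,n`:
* if the key `i = a j` satisfies `c i ≤ j < c (i+1)`, the element is already
  in its bucket region and we advance `j`;
* otherwise we swap `a j` with `a (c i + d i)` and increment `d i`. -/
inductive Step (n : ℕ) (c : ℕ → ℕ) :
    (ℕ × (ℕ → ℕ) × (ℕ → ℕ)) → (ℕ × (ℕ → ℕ) × (ℕ → ℕ)) → Prop
  | advance (j : ℕ) (d a : ℕ → ℕ) (h1 : j ≤ n)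
      (h2 : c (a j) ≤ j) (h3 : j < c (a j + 1)) :
      Step n c (j, d, a) (j + 1, d, a)
  | place (j : ℕ) (d a : ℕ → ℕ) (h1 : j ≤ n)
      (h2 : ¬ (c (a j) ≤ j ∧ j < c (a j + 1))) :
      Step n c (j, d, a)
        (j, Function.update d (a j) (d (a j) + 1), swapFn a j (c (a j) + d (a j)))

/-! ### Auxiliary definitions and lemmas -/

/-- Number of positions in `[1,n]` whose key is `i`. -/
def cnt (n : ℕ) (a : ℕ → ℕ) (i : ℕ) : ℕ :=
  ((Finset.Icc 1 n).filter (fun p => a p = i)).card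

section
variable {n : ℕ} {a₀ c : ℕ → ℕ}
variable (hc : ∀ i, c i = 1 + ((Finset.Icc 1 n).filter (fun p => a₀ p < i)).card)
include hc

lemma c_mono {i i' : ℕ} (h : i ≤ i') : c i ≤ c i' := by
  rw [hc, hc]
  have : (Finset.Icc 1 n).filter (fun p => a₀ p < i) ⊆
      (Finset.Icc 1 n).filter (fun p => a₀ p < i') := by
    intro p hp
    simp only [Finset.mem_filter] at *
    exact ⟨hp.1, by omega⟩
  have := Finset.card_le_card this
  omega

lemma c_pos (i : ℕ) : 1 ≤ c i := by rw [hc]; omega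

lemma c_le (i : ℕ) : c i ≤ n + 1 := by
  rw [hc]
  have := Finset.card_filter_le (Finset.Icc 1 n) (fun p => a₀ p < i)
  simp [Nat.card_Icc] at this
  omega

lemma c_succ (i : ℕ) : c (i + 1) = c i + cnt n a₀ i := by
  rw [hc, hc, cnt]
  have h1 : (Finset.Icc 1 n).filter (fun p => a₀ p < i + 1)
      = (Finset.Icc 1 n).filter (fun p => a₀ p < i) ∪
        (Finset.Icc 1 n).filter (fun p => a₀ p = i) := by
    ext p
    simp only [Finset.mem_union, Finset.mem_filter, Finset.mem_Icc]
    omega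
  rw [h1, Finset.card_union_of_disjoint]
  · ring
  · rw [Finset.disjoint_left]
    intro p hp hp'
    simp only [Finset.mem_filter] at *
    omega

end

lemma count_swap (s : Finset ℕ) (a : ℕ → ℕ) {p q : ℕ} (hp : p ∈ s) (hq : q ∈ s) (i : ℕ) :
    (s.filter (fun r => swapFn a p q r = i)).card = (s.filter (fun r => a r = i)).card := by
  apply Finset.card_bij' (fun r _ => if r = p then q else if r = q then p else r)
    (fun r _ => if r = p then q else if r = q then p else r)
  · intro r hr
    simp only [Finset.mem_filter] at *
    simp only [swapFn] at *
    split_ifs at * <;> simp_all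
  · intro r hr
    simp only [Finset.mem_filter] at *
    simp only [swapFn] at *
    split_ifs at * <;> simp_all
  · intro r hr
    split_ifs <;> simp_all
  · intro r hr
    split_ifs <;> simp_all

lemma sum_update_add_one (d : ℕ → ℕ) {i : ℕ} {s : Finset ℕ} (h : i ∈ s) :
    ∑ k ∈ s, Function.update d i (d i + 1) k = (∑ k ∈ s, d k) + 1 := by
  have key : ∀ k, Function.update d i (d i + 1) k = d k + if k = i then 1 else 0 := by
    intro k
    by_cases hk : k = i
    · subst hk; simp
    · simp [hk]
  simp_rw [key]
  rw [Finset.sum_add_distrib, Finset.sum_ite_eq' s i (fun _ => 1)]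
  simp [h]

lemma sum_cnt {n m : ℕ} {a₀ : ℕ → ℕ}
    (hkeys : ∀ p, 1 ≤ p → p ≤ n → 1 ≤ a₀ p ∧ a₀ p ≤ m) :
    ∑ i ∈ Finset.Icc 1 m, cnt n a₀ i = n := by
  have h := Finset.card_eq_sum_card_fiberwise
    (f := a₀) (s := Finset.Icc 1 n) (t := Finset.Icc 1 m) ?_
  · rw [Nat.card_Icc] at h
    simp only [cnt]
    omega
  · intro p hp
    simp only [Finset.coe_Icc, Set.mem_Icc] at *
    exact hkeys p hp.1 hp.2

lemma key_in_range {n m j : ℕ} {a₀ a : ℕ → ℕ}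
    (hkeys : ∀ p, 1 ≤ p → p ≤ n → 1 ≤ a₀ p ∧ a₀ p ≤ m)
    (P1 : ∀ i, cnt n a i = cnt n a₀ i)
    (hj1 : 1 ≤ j) (hjn : j ≤ n) : 1 ≤ a j ∧ a j ≤ m := by
  have hmem : j ∈ (Finset.Icc 1 n).filter (fun p => a p = a j) := by
    simp [Finset.mem_Icc, hj1, hjn]
  have h1 : 0 < cnt n a (a j) := Finset.card_pos.mpr ⟨j, hmem⟩
  rw [P1] at h1
  obtain ⟨p, hp⟩ := Finset.card_pos.mp h1
  simp only [Finset.mem_filter, Finset.mem_Icc] at hp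
  rw [← hp.2]
  exact hkeys p hp.1.1 hp.1.2

lemma step_fst_le {n : ℕ} {c : ℕ → ℕ} {s s' : ℕ × (ℕ → ℕ) × (ℕ → ℕ)}
    (h : Step n c s s') : s'.1 ≤ n + 1 := by
  cases h with
  | advance j d a h1 h2 h3 => simpa using h1
  | place j d a h1 h2 => simpa using Nat.le_succ_of_le h1

/-- The invariant of the process: the position is at least `1`; key counts are
preserved; the filled part of each bucket holds only its own key; every scanned
position lies within its key's bucket; fill counts stay within buckets. -/
def Inv (n : ℕ) (a₀ c : ℕ → ℕ) (s : ℕ × (ℕ → ℕ) × (ℕ → ℕ)) : Prop :=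
  1 ≤ s.1 ∧
  (∀ i, cnt n s.2.2 i = cnt n a₀ i) ∧
  (∀ i p, c i ≤ p → p < c i + s.2.1 i → s.2.2 p = i) ∧
  (∀ p, 1 ≤ p → p < s.1 → c (s.2.2 p) ≤ p ∧ p < c (s.2.2 p + 1)) ∧
  (∀ i, c i + s.2.1 i ≤ c (i + 1))

section
variable {n : ℕ} {a₀ c : ℕ → ℕ}
variable (hc : ∀ i, c i = 1 + ((Finset.Icc 1 n).filter (fun p => a₀ p < i)).card)
include hc

/-- If the whole bucket of `i := a j` is filled with key `i` while `a j = i`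
with `j` outside the bucket, we get a contradiction with count preservation. -/
lemma bucket_full_absurd {a : ℕ → ℕ} {j i : ℕ}
    (hfull : ∀ p, c i ≤ p → p < c (i + 1) → a p = i)
    (hj1 : 1 ≤ j) (hjn : j ≤ n) (haj : a j = i)
    (hout : ¬ (c i ≤ j ∧ j < c (i + 1)))
    (hcount : cnt n a i = cnt n a₀ i) : False := by
  have hsub : insert j (Finset.Ico (c i) (c (i + 1))) ⊆
      (Finset.Icc 1 n).filter (fun p => a p = i) := by
    intro p hp
    simp only [Finset.mem_insert, Finset.mem_Ico] at hp
    simp only [Finset.mem_filter, Finset.mem_Icc]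
    rcases hp with rfl | hp
    · exact ⟨⟨hj1, hjn⟩, haj⟩
    · have h1 := c_pos hc i
      have h2 := c_le hc (i + 1)
      exact ⟨⟨by omega, by omega⟩, hfull p hp.1 hp.2⟩
  have hnot : j ∉ Finset.Ico (c i) (c (i + 1)) := by
    simp only [Finset.mem_Ico]
    omega
  have hcard := Finset.card_le_card hsub
  rw [Finset.card_insert_of_notMem hnot, Nat.card_Ico] at hcard
  have h3 := c_succ hc i
  have h4 : cnt n a i = ((Finset.Icc 1 n).filter (fun p => a p = i)).card := rfl
  omega

/-- The invariant is preserved by each step of the process. -/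
lemma inv_step {s s' : ℕ × (ℕ → ℕ) × (ℕ → ℕ)}
    (hinv : Inv n a₀ c s) (hs : Step n c s s') : Inv n a₀ c s' := by
  obtain ⟨P5, P1, P2, P3, P4⟩ := hinv
  cases hs with
  | advance j d a h1 h2 h3 =>
    refine ⟨by omega, P1, P2, ?_, P4⟩
    intro p hp1 hp2
    rcases Nat.lt_succ_iff_lt_or_eq.mp hp2 with h | rfl
    · exact P3 p hp1 h
    · exact ⟨h2, h3⟩
  | place j d a h1 h2 =>
    simp only at P5 P1 P2 P3 P4 ⊢
    set i := a j with hi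
    set t := c i + d i with ht
    -- Claim 1: the bucket of i is not yet full
    have claim1 : t < c (i + 1) := by
      by_contra hcon
      have hfull : ∀ p, c i ≤ p → p < c (i + 1) → a p = i := by
        intro p hp1 hp2
        exact P2 i p hp1 (by omega)
      exact bucket_full_absurd hc hfull P5 h1 rfl h2 (P1 i)
    -- Claim 2: j is before the bucket of i
    have claim2 : j < c i := by
      by_contra hcon
      push_neg at hcon
      have hji : c (i + 1) ≤ j := by
        by_contra h
        exact h2 ⟨hcon, by omega⟩
      have hfull : ∀ p, c i ≤ p → p < c (i + 1) → a p = i := by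
        intro p hp1 hp2
        have hp0 : 1 ≤ p := le_trans (c_pos hc i) hp1
        have hpj : p < j := by omega
        obtain ⟨hA, hB⟩ := P3 p hp0 hpj
        rcases lt_trichotomy (a p) i with h | h | h
        · have : c (a p + 1) ≤ c i := c_mono hc (by omega)
          omega
        · exact h
        · have : c (i + 1) ≤ c (a p) := c_mono hc (by omega)
          omega
      exact bucket_full_absurd hc hfull P5 h1 rfl h2 (P1 i)
    have htn : t ≤ n := by
      have := c_le hc (i + 1)
      omega
    have ht1 : 1 ≤ t := by
      have := c_pos hc i
      omega
    have hjt : j < t := by omega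
    -- values of the new array
    have ha'j : swapFn a j t j = a t := by
      simp [swapFn]
    have ha't : swapFn a j t t = a j := by
      simp [swapFn]
      intro h; omega
    have ha'o : ∀ p, p ≠ j → p ≠ t → swapFn a j t p = a p := by
      intro p h₁ h₂
      simp [swapFn, h₁, h₂]
    refine ⟨P5, ?_, ?_, ?_, ?_⟩
    · -- counts preserved
      dsimp only
      intro k
      rw [← P1 k]
      exact count_swap (Finset.Icc 1 n) a (by simp; omega) (by simp; omega) k
    · -- filled regions
      dsimp only
      intro k p hp1 hp2
      by_cases hk : k = i
      · subst hk
        rw [Function.update_self] at hp2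
        by_cases hpt : p = t
        · rw [hpt, ha't]
        · have : p ≠ j := by omega
          rw [ha'o p this hpt]
          exact P2 i p hp1 (by omega)
      · rw [Function.update_of_ne hk] at hp2
        have hpj : p ≠ j := by
          intro h
          subst h
          exact hk (by rw [← P2 k p hp1 hp2, hi])
        have hpt : p ≠ t := by
          intro h
          subst h
          rcases lt_trichotomy k i with hki | hki | hki
          · have : c (k + 1) ≤ c i := c_mono hc (by omega)
            have := P4 k
            omega
          · exact hk hki
          · have : c (i + 1) ≤ c k := c_mono hc (by omega)
            omega
        rw [ha'o p hpj hpt]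
        exact P2 k p hp1 hp2
    · -- scanned prefix
      dsimp only
      intro p hp1 hp2
      have h₁ : p ≠ j := by omega
      have h₂ : p ≠ t := by omega
      rw [ha'o p h₁ h₂]
      exact P3 p hp1 hp2
    · -- fill counts within buckets
      dsimp only
      intro k
      by_cases hk : k = i
      · subst hk
        rw [Function.update_self]
        omega
      · rw [Function.update_of_ne hk]
        exact P4 k

end

/-- Cycle-leader counting sort: with keys in `[1,m]`,
`c i = 1 + #{p ∈ [1,n] : a₀ p < i}` (so `c (m+1) = n+1`), and fill counts `d`
initially `0`, any execution of the process starting at position `j = 1` takes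
at most `2n` steps, and when it terminates (i.e. `j = n + 1`) the array is
sorted by key on positions `1,…,n`. -/
theorem stmt_17 (n m : ℕ) (a₀ : ℕ → ℕ)
    (hkeys : ∀ p, 1 ≤ p → p ≤ n → 1 ≤ a₀ p ∧ a₀ p ≤ m)
    (c : ℕ → ℕ)
    (hc : ∀ i, c i = 1 + ((Finset.Icc 1 n).filter (fun p => a₀ p < i)).card)
    (T : ℕ) (tr : ℕ → ℕ × (ℕ → ℕ) × (ℕ → ℕ))
    (h0 : tr 0 = (1, fun _ => 0, a₀))
    (hstep : ∀ t < T, Step n c (tr t) (tr (t + 1))) :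
    T ≤ 2 * n ∧
    ((tr T).1 = n + 1 →
      ∀ p q, 1 ≤ p → p ≤ q → q ≤ n → (tr T).2.2 p ≤ (tr T).2.2 q) := by
  -- The main induction: the invariant holds at all times and the potential
  -- `j + ∑ d` increases by exactly one at each step.
  have main : ∀ t, t ≤ T →
      Inv n a₀ c (tr t) ∧
      (tr t).1 + ∑ i ∈ Finset.Icc 1 m, (tr t).2.1 i = 1 + t := by
    intro t
    induction t with
    | zero =>
      intro _
      rw [h0]
      constructor
      · refine ⟨le_refl 1, fun i => rfl, ?_, ?_, ?_⟩
        · intro i p h1 h2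
          simp only at h2
          omega
        · intro p h1 h2
          simp only at h2
          omega
        · intro i
          simp only [add_zero]
          exact c_mono hc (Nat.le_succ i)
      · simp
    | succ t ih =>
      intro h
      obtain ⟨hInv, hSum⟩ := ih (by omega)
      have hst := hstep t (by omega)
      refine ⟨inv_step hc hInv hst, ?_⟩
      obtain ⟨P5, P1, P2, P3, P4⟩ := hInv
      generalize hB : tr (t + 1) = s' at *
      generalize hA : tr t = s at *
      cases hst with
      | advance j d a h1 h2 h3 =>
        simp only at hSum ⊢
        omega
      | place j d a h1 h2 =>
        simp only at hSum P5 P1 ⊢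
        have hmem : a j ∈ Finset.Icc 1 m := by
          rw [Finset.mem_Icc]
          exact key_in_range hkeys P1 P5 h1
        rw [sum_update_add_one d hmem]
        omega
  obtain ⟨hInvT, hSumT⟩ := main T le_rfl
  obtain ⟨Q5, Q1, Q2, Q3, Q4⟩ := hInvT
  constructor
  · -- Termination bound
    have hjT : (tr T).1 ≤ n + 1 := by
      rcases Nat.eq_zero_or_pos T with rfl | hT
      · rw [h0]; simp
      · have := step_fst_le (hstep (T - 1) (by omega))
        have hTT : T - 1 + 1 = T := by omega
        rwa [hTT] at this
    have hdT : ∑ i ∈ Finset.Icc 1 m, (tr T).2.1 i ≤ n := by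
      calc ∑ i ∈ Finset.Icc 1 m, (tr T).2.1 i
          ≤ ∑ i ∈ Finset.Icc 1 m, cnt n a₀ i := by
            apply Finset.sum_le_sum
            intro k _
            have h1 := Q4 k
            have h2 := c_succ hc k
            omega
        _ = n := sum_cnt hkeys
    omega
  · -- Sortedness at termination
    intro hterm p q hp hpq hq
    obtain ⟨Hp1, Hp2⟩ := Q3 p hp (by omega)
    obtain ⟨Hq1, Hq2⟩ := Q3 q (by omega) (by omega)
    by_contra hlt
    push_neg at hlt
    have : c ((tr T).2.2 q + 1) ≤ c ((tr T).2.2 p) := c_mono hc (by omega)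
    omega

end Stmt17
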